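/- Let A, B, X be n×n complex matrices with A and B positive definite, let λ₁,…,λₙ be the eigenvalues of A and ν₁,…,νₙ the eigenvalues of B, and set K̲ = min{ K((λᵢ/νⱼ)^{1/2}, 2) : i, j = 1,…,n }. If 0 < v ≤ 1/2, then ‖(1 − v)AX + vXB‖_F² − (1 − v)²‖AX − XB‖_F² ≤ K̲^{−r̂₁} ‖A^{1−v} X B^{v}‖_F² − r₁‖A^{1/2} X B^{1/2} − XB‖_F², where r = min{v, 1 − v}, r₁ = min{2r, 1 − 2r} and r̂₁ = min{2r₁, 1 − 2r₁}. -/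

import Mathlib

open Matrix
open scoped ComplexOrder

/-- Real power of a matrix, defined for Hermitian matrices via the spectral
decomposition (functional calculus); junk value otherwise. -/
noncomputable def mrpow {n : ℕ} (A : Matrix (Fin n) (Fin n) ℂ) (t : ℝ) :
    Matrix (Fin n) (Fin n) ℂ :=
  if h : A.IsHermitian then
    (h.eigenvectorUnitary : Matrix (Fin n) (Fin n) ℂ)
      * Matrix.diagonal (fun i => ((h.eigenvalues i ^ t : ℝ) : ℂ))
      * star (h.eigenvectorUnitary : Matrix (Fin n) (Fin n) ℂ)
  else A

/-- The squared Hilbert-Schmidt (Frobenius) norm `‖A‖_F^2`. -/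
noncomputable def frobSq {n : ℕ} (A : Matrix (Fin n) (Fin n) ℂ) : ℝ :=
  ∑ i : Fin n, ∑ j : Fin n, ‖A i j‖ ^ 2

/-- The Kantorovich constant `K(t, 2) = (t + 1)^2 / (4 t)`. -/
noncomputable def Kant (t : ℝ) : ℝ := (t + 1) ^ 2 / (4 * t)

lemma Kant_pos {t : ℝ} (ht : 0 < t) : 0 < Kant t := by
  unfold Kant; positivity

lemma Kant_ge_one {t : ℝ} (ht : 0 < t) : 1 ≤ Kant t := by
  rw [Kant, le_div_iff₀ (by positivity)]; nlinarith [sq_nonneg (t - 1)]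

lemma Kant_inv {t : ℝ} (ht : 0 < t) : Kant t⁻¹ = Kant t := by
  unfold Kant; field_simp; ring

/-- Zuo–Shi–Fujii refined Young with Kantorovich constant, easy half. -/
lemma zsf_half {u α : ℝ} (hu : 0 < u) (hα0 : 0 ≤ α) (hα1 : α ≤ 1/2) :
    Kant u ^ α * u ^ α ≤ 1 - α + α * u := by
  have h1 : Kant u ^ α * u ^ α = ((u+1)/2) ^ (2*α) := by
    rw [← Real.mul_rpow (le_of_lt (Kant_pos hu)) hu.le]
    have : Kant u * u = ((u+1)/2)^2 := by unfold Kant; field_simp; ring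
    rw [this, ← Real.rpow_natCast ((u+1)/2) 2, ← Real.rpow_mul (by positivity)]
    norm_num
  rw [h1]
  have := Real.geom_mean_le_arith_mean2_weighted (by linarith : (0:ℝ) ≤ 2*α)
    (by linarith : (0:ℝ) ≤ 1 - 2*α) (by positivity : (0:ℝ) ≤ (u+1)/2)
    (by norm_num : (0:ℝ) ≤ 1) (by ring)
  rw [Real.one_rpow, mul_one] at this
  calc ((u+1)/2) ^ (2*α) ≤ 2*α * ((u+1)/2) + (1-2*α) * 1 := this
    _ = 1 - α + α * u := by ring

/-- Zuo–Shi–Fujii: `K(u,2)^min(α,1−α) u^α ≤ 1−α+αu`. -/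
lemma zsf {u α : ℝ} (hu : 0 < u) (hα0 : 0 ≤ α) (hα1 : α ≤ 1) :
    Kant u ^ (min α (1-α)) * u ^ α ≤ 1 - α + α * u := by
  rcases le_or_gt α (1/2) with h | h
  · rw [min_eq_left (by linarith)]; exact zsf_half hu hα0 h
  · rw [min_eq_right (by linarith)]
    have h2 := zsf_half (u := u⁻¹) (α := 1 - α) (by positivity) (by linarith) (by linarith)
    rw [Kant_inv hu] at h2
    have h3 := mul_le_mul_of_nonneg_left h2 hu.le
    calc Kant u ^ (1-α) * u ^ α
        = u * (Kant u ^ (1-α) * u⁻¹ ^ (1-α)) := by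
          rw [← Real.rpow_neg_one u, ← Real.rpow_mul hu.le]
          have huu : u * u ^ (-1*(1-α)) = u ^ α := by
            nth_rewrite 1 [← Real.rpow_one u]
            rw [← Real.rpow_add hu]; ring_nf
          rw [mul_comm (Kant u ^ (1-α)) (u ^ (-1*(1-α))), ← mul_assoc, huu, mul_comm]
      _ ≤ u * (1 - (1-α) + (1-α) * u⁻¹) := h3
      _ = 1 - α + α * u := by field_simp; ring

lemma core {t v : ℝ} (ht : 0 < t) (hv0 : 0 < v) (hv : v ≤ 1/2) :
    2*(1-v)*t^2 - (1-2*v) + min (2*v) (1-2*v) * (t-1)^2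
      ≤ Kant t ^ (-(min (2*(min (2*v) (1-2*v))) (1 - 2*(min (2*v) (1-2*v)))))
        * t ^ (4-4*v : ℝ) := by
  have hK : 0 < Kant t := Kant_pos ht
  rcases le_or_gt v (1/4) with hv4 | hv4
  · -- r1 = 2v
    rw [min_eq_left (by linarith : 2*v ≤ 1-2*v)]
    set m : ℝ := min (2*(2*v)) (1-2*(2*v)) with hm
    have hm0 : 0 ≤ m := le_min (by linarith) (by linarith)
    set B : ℝ := 2*t^2 - 4*v*t + 4*v - 1 with hBdef
    have hLHS : 2*(1-v)*t^2 - (1-2*v) + 2*v*(t-1)^2 = B := by rw [hBdef]; ring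
    rcases le_or_gt B 0 with hB | hB
    · calc 2*(1-v)*t^2 - (1-2*v) + 2*v*(t-1)^2 = B := hLHS
        _ ≤ 0 := hB
        _ ≤ Kant t ^ (-m) * t ^ (4-4*v : ℝ) := by positivity
    · have hz := zsf ht (α := 4*v) (by linarith) (by linarith)
      have hmz : min (4*v) (1-(4*v)) = m := by rw [hm]; ring_nf
      rw [hmz] at hz
      have hq : (1-(4*v)+(4*v)*t) * B ≤ t^4 := by
        nlinarith [sq_nonneg ((t-1)*(t+1-4*v)), sq_nonneg (t-1)]
      have h3 : B * (Kant t ^ m * t ^ (4*v : ℝ)) ≤ t^4 := by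
        calc B * (Kant t ^ m * t ^ (4*v : ℝ)) ≤ B * (1-(4*v)+(4*v)*t) :=
              mul_le_mul_of_nonneg_left hz hB.le
          _ = (1-(4*v)+(4*v)*t) * B := by ring
          _ ≤ t^4 := hq
      have h5 : B ≤ t^4 / (Kant t ^ m * t ^ (4*v : ℝ)) :=
        (le_div_iff₀ (by positivity)).mpr h3
      have h6 : Kant t ^ (-m) * t ^ (4-4*v : ℝ)
          = t^4 / (Kant t ^ m * t ^ (4*v : ℝ)) := by
        rw [Real.rpow_neg hK.le, show (4-4*v:ℝ) = (4:ℝ) - 4*v from by ring,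
          Real.rpow_sub ht, show ((4:ℝ):ℝ) = ((4:ℕ):ℝ) from by norm_num,
          Real.rpow_natCast]
        field_simp
      rw [hLHS, h6]; exact h5
  · -- r1 = 1-2v
    rw [min_eq_right (by linarith : 1-2*v ≤ 2*v)]
    set m : ℝ := min (2*(1-2*v)) (1-2*(1-2*v)) with hm
    have hm0 : 0 ≤ m := le_min (by linarith) (by linarith)
    set B : ℝ := (3-4*v)*t - (2-4*v) with hBdef
    have hLHS : 2*(1-v)*t^2 - (1-2*v) + (1-2*v)*(t-1)^2 = t * B := by rw [hBdef]; ring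
    rcases le_or_gt B 0 with hB | hB
    · calc 2*(1-v)*t^2 - (1-2*v) + (1-2*v)*(t-1)^2 = t * B := hLHS
        _ ≤ 0 := mul_nonpos_of_nonneg_of_nonpos ht.le hB
        _ ≤ Kant t ^ (-m) * t ^ (4-4*v : ℝ) := by positivity
    · have hz := zsf ht (α := 4*v-1) (by linarith) (by linarith)
      have hmz : min (4*v-1) (1-(4*v-1)) = m := by rw [hm, min_comm]; ring_nf
      rw [hmz] at hz
      have hq : (1-(4*v-1)+(4*v-1)*t) * B ≤ t^2 := by
        nlinarith [sq_nonneg ((2-4*v)*(t-1))]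
      have h3 : (t*B) * (Kant t ^ m * t ^ (4*v-1 : ℝ)) ≤ t^3 := by
        calc (t*B) * (Kant t ^ m * t ^ (4*v-1 : ℝ))
            = t * (B * (Kant t ^ m * t ^ (4*v-1 : ℝ))) := by ring
          _ ≤ t * ((1-(4*v-1)+(4*v-1)*t) * B) := by
              apply mul_le_mul_of_nonneg_left _ ht.le
              calc B * (Kant t ^ m * t ^ (4*v-1 : ℝ)) ≤ B * (1-(4*v-1)+(4*v-1)*t) :=
                    mul_le_mul_of_nonneg_left hz hB.le
                _ = (1-(4*v-1)+(4*v-1)*t) * B := by ring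
          _ ≤ t * t^2 := mul_le_mul_of_nonneg_left hq ht.le
          _ = t^3 := by ring
      have h5 : t*B ≤ t^3 / (Kant t ^ m * t ^ (4*v-1 : ℝ)) :=
        (le_div_iff₀ (by positivity)).mpr h3
      have h6 : Kant t ^ (-m) * t ^ (4-4*v : ℝ)
          = t^3 / (Kant t ^ m * t ^ (4*v-1 : ℝ)) := by
        rw [Real.rpow_neg hK.le, show (4-4*v:ℝ) = (3:ℝ) - (4*v-1) from by ring,
          Real.rpow_sub ht, show ((3:ℝ):ℝ) = ((3:ℕ):ℝ) from by norm_num,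
          Real.rpow_natCast]
        field_simp
      rw [hLHS, h6]; exact h5

lemma scalar_final {a b v : ℝ} (ha : 0 < a) (hb : 0 < b) (hv0 : 0 < v) (hv : v ≤ 1/2) :
    ((1-v)*a + v*b)^2 - (1-v)^2*(a-b)^2
        + min (2*v) (1-2*v) * (a^(1/2:ℝ)*b^(1/2:ℝ) - b)^2
      ≤ Kant (Real.sqrt (a/b))
          ^ (-(min (2*(min (2*v) (1-2*v))) (1-2*(min (2*v) (1-2*v)))))
        * (a^(1-v:ℝ)*b^(v:ℝ))^2 := by
  have hts : 0 < Real.sqrt (a/b) := Real.sqrt_pos.mpr (div_pos ha hb)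
  set t := Real.sqrt (a/b) with htdef
  have hab : a = t^2 * b := by
    rw [htdef, Real.sq_sqrt (le_of_lt (div_pos ha hb))]; field_simp
  have hhalf : a^(1/2:ℝ)*b^(1/2:ℝ) - b = (t - 1) * b := by
    have h1 : t * b = Real.sqrt a * Real.sqrt b := by
      rw [htdef, Real.sqrt_div ha.le, div_mul_eq_mul_div, mul_comm (Real.sqrt a) b]
      nth_rewrite 1 [← Real.mul_self_sqrt hb.le]
      rw [mul_assoc, mul_comm]
      field_simp
    rw [← Real.sqrt_eq_rpow, ← Real.sqrt_eq_rpow, ← h1]; ring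
  have hkey : a^(1-v:ℝ)*b^(v:ℝ) = t^(2-2*v:ℝ) * b := by
    rw [hab, Real.mul_rpow (by positivity) hb.le, ← Real.rpow_natCast t 2,
      ← Real.rpow_mul hts.le, mul_assoc, ← Real.rpow_add hb,
      show ((1:ℝ)-v) + v = (1:ℝ) from by ring, Real.rpow_one,
      show ((2:ℕ):ℝ) * (1-v) = (2-2*v:ℝ) from by push_cast; ring]
  have hsq2 : (t^(2-2*v:ℝ))^2 = t^(4-4*v:ℝ) := by
    rw [sq, ← Real.rpow_add hts]; ring_nf
  have hc := core hts hv0 hv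
  have h2 := mul_le_mul_of_nonneg_left hc (sq_nonneg b)
  calc ((1-v)*a + v*b)^2 - (1-v)^2*(a-b)^2
        + min (2*v) (1-2*v) * (a^(1/2:ℝ)*b^(1/2:ℝ) - b)^2
      = b^2 * (2*(1-v)*t^2 - (1-2*v) + min (2*v) (1-2*v) * (t-1)^2) := by
        rw [hhalf]; rw [hab]; ring
    _ ≤ b^2 * (Kant t ^ (-(min (2*(min (2*v) (1-2*v))) (1-2*(min (2*v) (1-2*v)))))
          * t ^ (4-4*v : ℝ)) := h2
    _ = Kant t ^ (-(min (2*(min (2*v) (1-2*v))) (1-2*(min (2*v) (1-2*v)))))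
          * (a^(1-v:ℝ)*b^(v:ℝ))^2 := by
        rw [hkey, mul_pow, hsq2]; ring

lemma mrpow_eq {n : ℕ} {A : Matrix (Fin n) (Fin n) ℂ} (hA : A.IsHermitian) (t : ℝ) :
    mrpow A t = (hA.eigenvectorUnitary : Matrix (Fin n) (Fin n) ℂ)
      * Matrix.diagonal (fun i => ((hA.eigenvalues i ^ t : ℝ) : ℂ))
      * star (hA.eigenvectorUnitary : Matrix (Fin n) (Fin n) ℂ) := by
  rw [mrpow, dif_pos hA]

lemma spectral' {n : ℕ} {A : Matrix (Fin n) (Fin n) ℂ} (hA : A.IsHermitian) :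
    A = (hA.eigenvectorUnitary : Matrix (Fin n) (Fin n) ℂ)
      * Matrix.diagonal (fun i => ((hA.eigenvalues i : ℝ) : ℂ))
      * star (hA.eigenvectorUnitary : Matrix (Fin n) (Fin n) ℂ) :=
  hA.spectral_theorem

lemma frobSq_eq_trace {n : ℕ} (M : Matrix (Fin n) (Fin n) ℂ) :
    frobSq M = (Matrix.trace (star M * M)).re := by
  unfold frobSq
  rw [Matrix.trace]
  rw [Complex.re_sum]
  rw [Finset.sum_comm]
  apply Finset.sum_congr rfl
  intro i _
  simp only [Matrix.diag_apply, Matrix.mul_apply, Matrix.star_apply, RCLike.star_def,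
    Complex.re_sum]
  apply Finset.sum_congr rfl
  intro j _
  rw [Complex.sq_norm, ← Complex.normSq_eq_conj_mul_self, Complex.ofReal_re]

lemma frobSq_conj {n : ℕ} (U V M : Matrix (Fin n) (Fin n) ℂ)
    (hU : star U * U = 1) (hV : star V * V = 1) :
    frobSq (U * M * star V) = frobSq M := by
  rw [frobSq_eq_trace, frobSq_eq_trace]
  have h1 : star (U * M * star V) * (U * M * star V)
      = V * ((star M * M) * star V) := by
    rw [Matrix.star_mul, Matrix.star_mul, star_star]
    simp only [mul_assoc]
    rw [← mul_assoc (star U) U, hU, one_mul]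
  rw [h1, Matrix.trace_mul_comm, mul_assoc, hV, mul_one]

lemma collapse {n : ℕ} (U V W P Q : Matrix (Fin n) (Fin n) ℂ) (hV : star V * V = 1) :
    (U * P * star V) * (V * Q * star W) = U * (P * Q) * star W := by
  simp only [mul_assoc]
  rw [← mul_assoc (star V) V, hV, one_mul]

theorem stmt_18 {n : ℕ} (A B X : Matrix (Fin n) (Fin n) ℂ) (v Kmin r r1 rh1 : ℝ)
    (hn : 0 < n) (hA : A.PosDef) (hB : B.PosDef)
    (hK : Kmin = sInf (Set.range fun p : Fin n × Fin n =>
      Kant (Real.sqrt (hA.1.eigenvalues p.1 / hB.1.eigenvalues p.2))))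
    (hr : r = min v (1 - v)) (hr1 : r1 = min (2 * r) (1 - 2 * r))
    (hrh1 : rh1 = min (2 * r1) (1 - 2 * r1))
    (hv0 : 0 < v) (hv : v ≤ 1 / 2) :
    frobSq (((1 - v : ℝ) : ℂ) • (A * X) + ((v : ℝ) : ℂ) • (X * B))
        - (1 - v) ^ 2 * frobSq (A * X - X * B) ≤
      Kmin ^ (-rh1) * frobSq (mrpow A (1 - v) * X * mrpow B v)
        - r1 * frobSq (mrpow A (1 / 2) * X * mrpow B (1 / 2) - X * B) := by
  have hAh : A.IsHermitian := hA.1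
  have hBh : B.IsHermitian := hB.1
  set lam : Fin n → ℝ := hAh.eigenvalues with hlam
  set nu : Fin n → ℝ := hBh.eigenvalues with hnu
  set U : Matrix (Fin n) (Fin n) ℂ := (hAh.eigenvectorUnitary : Matrix (Fin n) (Fin n) ℂ) with hUdef
  set V : Matrix (Fin n) (Fin n) ℂ := (hBh.eigenvectorUnitary : Matrix (Fin n) (Fin n) ℂ) with hVdef
  have hU1 : star U * U = 1 := Matrix.UnitaryGroup.star_mul_self hAh.eigenvectorUnitary
  have hV1 : star V * V = 1 := Matrix.UnitaryGroup.star_mul_self hBh.eigenvectorUnitary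
  have hU2 : U * star U = 1 := (Matrix.mem_unitaryGroup_iff).mp hAh.eigenvectorUnitary.2
  have hV2 : V * star V = 1 := (Matrix.mem_unitaryGroup_iff).mp hBh.eigenvectorUnitary.2
  have hAs : A = U * Matrix.diagonal (fun i => ((lam i : ℝ) : ℂ)) * star U := spectral' hAh
  have hBs : B = V * Matrix.diagonal (fun i => ((nu i : ℝ) : ℂ)) * star V := spectral' hBh
  have hmA : ∀ t : ℝ, mrpow A t
      = U * Matrix.diagonal (fun i => ((lam i ^ t : ℝ) : ℂ)) * star U := fun t => mrpow_eq hAh t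
  have hmB : ∀ t : ℝ, mrpow B t
      = V * Matrix.diagonal (fun i => ((nu i ^ t : ℝ) : ℂ)) * star V := fun t => mrpow_eq hBh t
  set Y : Matrix (Fin n) (Fin n) ℂ := star U * X * V with hYdef
  have hX : X = U * Y * star V := by
    rw [hYdef]
    simp only [mul_assoc]
    rw [hV2, mul_one, ← mul_assoc, hU2, one_mul]
  have eAX : A * X = U * (Matrix.diagonal (fun i => ((lam i : ℝ) : ℂ)) * Y) * star V := by
    conv_lhs => rw [hAs, hX]
    exact collapse U U V _ _ hU1
  have eXB : X * B = U * (Y * Matrix.diagonal (fun i => ((nu i : ℝ) : ℂ))) * star V := by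
    conv_lhs => rw [hX, hBs]
    exact collapse U V V _ _ hV1
  have eM3 : ∀ s t : ℝ, mrpow A s * X * mrpow B t
      = U * (Matrix.diagonal (fun i => ((lam i ^ s : ℝ) : ℂ)) * Y
          * Matrix.diagonal (fun i => ((nu i ^ t : ℝ) : ℂ))) * star V := by
    intro s t
    rw [hmA s, hmB t, hX, collapse U U V _ _ hU1, collapse U V V _ _ hV1]
  have e1 : ((1 - v : ℝ) : ℂ) • (A * X) + ((v : ℝ) : ℂ) • (X * B)
      = U * (((1 - v : ℝ) : ℂ) • (Matrix.diagonal (fun i => ((lam i : ℝ) : ℂ)) * Y)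
          + ((v : ℝ) : ℂ) • (Y * Matrix.diagonal (fun i => ((nu i : ℝ) : ℂ)))) * star V := by
    rw [eAX, eXB]
    simp only [Matrix.mul_add, Matrix.add_mul, Matrix.mul_smul, Matrix.smul_mul]
  have e2 : A * X - X * B
      = U * (Matrix.diagonal (fun i => ((lam i : ℝ) : ℂ)) * Y
          - Y * Matrix.diagonal (fun i => ((nu i : ℝ) : ℂ))) * star V := by
    rw [eAX, eXB]
    simp only [Matrix.mul_sub, Matrix.sub_mul]
  have e4 : mrpow A (1/2) * X * mrpow B (1/2) - X * B
      = U * (Matrix.diagonal (fun i => ((lam i ^ ((1:ℝ)/2) : ℝ) : ℂ)) * Y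
            * Matrix.diagonal (fun i => ((nu i ^ ((1:ℝ)/2) : ℝ) : ℂ))
          - Y * Matrix.diagonal (fun i => ((nu i : ℝ) : ℂ))) * star V := by
    rw [eM3, eXB]
    simp only [Matrix.mul_sub, Matrix.sub_mul]
  rw [e1, e2, e4, eM3]
  rw [frobSq_conj _ _ _ hU1 hV1, frobSq_conj _ _ _ hU1 hV1,
    frobSq_conj _ _ _ hU1 hV1, frobSq_conj _ _ _ hU1 hV1]
  have habs : ∀ (c : ℝ) (z : ℂ), ‖(c:ℂ) * z‖ ^ 2 = c^2 * ‖z‖ ^ 2 := by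
    intro c z; rw [norm_mul, mul_pow, Complex.norm_real, Real.norm_eq_abs, sq_abs]
  have f1 : frobSq (((1 - v : ℝ) : ℂ) • (Matrix.diagonal (fun i => ((lam i : ℝ) : ℂ)) * Y)
          + ((v : ℝ) : ℂ) • (Y * Matrix.diagonal (fun i => ((nu i : ℝ) : ℂ))))
      = ∑ i : Fin n, ∑ j : Fin n,
          ((1-v)*lam i + v*nu j)^2 * ‖Y i j‖^2 := by
    unfold frobSq
    refine Finset.sum_congr rfl fun i _ => Finset.sum_congr rfl fun j _ => ?_
    have he : (((1 - v : ℝ) : ℂ) • (Matrix.diagonal (fun i => ((lam i : ℝ) : ℂ)) * Y)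
          + ((v : ℝ) : ℂ) • (Y * Matrix.diagonal (fun i => ((nu i : ℝ) : ℂ)))) i j
        = ((((1-v)*lam i + v*nu j : ℝ)) : ℂ) * Y i j := by
      simp only [Matrix.add_apply, Matrix.smul_apply, Matrix.diagonal_mul, Matrix.mul_diagonal,
        smul_eq_mul]
      push_cast; ring
    rw [he, habs]
  have f2 : frobSq (Matrix.diagonal (fun i => ((lam i : ℝ) : ℂ)) * Y
          - Y * Matrix.diagonal (fun i => ((nu i : ℝ) : ℂ)))
      = ∑ i : Fin n, ∑ j : Fin n, (lam i - nu j)^2 * ‖Y i j‖^2 := by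
    unfold frobSq
    refine Finset.sum_congr rfl fun i _ => Finset.sum_congr rfl fun j _ => ?_
    have he : (Matrix.diagonal (fun i => ((lam i : ℝ) : ℂ)) * Y
          - Y * Matrix.diagonal (fun i => ((nu i : ℝ) : ℂ))) i j
        = (((lam i - nu j : ℝ)) : ℂ) * Y i j := by
      simp only [Matrix.sub_apply, Matrix.diagonal_mul, Matrix.mul_diagonal]
      push_cast; ring
    rw [he, habs]
  have f3 : frobSq (Matrix.diagonal (fun i => ((lam i ^ (1-v) : ℝ) : ℂ)) * Y
          * Matrix.diagonal (fun i => ((nu i ^ v : ℝ) : ℂ)))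
      = ∑ i : Fin n, ∑ j : Fin n,
          (lam i ^ (1-v) * nu j ^ v)^2 * ‖Y i j‖^2 := by
    unfold frobSq
    refine Finset.sum_congr rfl fun i _ => Finset.sum_congr rfl fun j _ => ?_
    have he : (Matrix.diagonal (fun i => ((lam i ^ (1-v) : ℝ) : ℂ)) * Y
          * Matrix.diagonal (fun i => ((nu i ^ v : ℝ) : ℂ))) i j
        = (((lam i ^ (1-v) * nu j ^ v : ℝ)) : ℂ) * Y i j := by
      simp only [Matrix.diagonal_mul, Matrix.mul_diagonal]
      push_cast; ring
    rw [he, habs]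
  have f4 : frobSq (Matrix.diagonal (fun i => ((lam i ^ ((1:ℝ)/2) : ℝ) : ℂ)) * Y
            * Matrix.diagonal (fun i => ((nu i ^ ((1:ℝ)/2) : ℝ) : ℂ))
          - Y * Matrix.diagonal (fun i => ((nu i : ℝ) : ℂ)))
      = ∑ i : Fin n, ∑ j : Fin n,
          (lam i ^ ((1:ℝ)/2) * nu j ^ ((1:ℝ)/2) - nu j)^2 * ‖Y i j‖^2 := by
    unfold frobSq
    refine Finset.sum_congr rfl fun i _ => Finset.sum_congr rfl fun j _ => ?_
    have he : (Matrix.diagonal (fun i => ((lam i ^ ((1:ℝ)/2) : ℝ) : ℂ)) * Y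
            * Matrix.diagonal (fun i => ((nu i ^ ((1:ℝ)/2) : ℝ) : ℂ))
          - Y * Matrix.diagonal (fun i => ((nu i : ℝ) : ℂ))) i j
        = (((lam i ^ ((1:ℝ)/2) * nu j ^ ((1:ℝ)/2) - nu j : ℝ)) : ℂ) * Y i j := by
      simp only [Matrix.sub_apply, Matrix.diagonal_mul, Matrix.mul_diagonal]
      push_cast; ring
    rw [he, habs]
  rw [f1, f2, f3, f4]
  have hKm : ∀ (i j : Fin n), Kmin ≤ Kant (Real.sqrt (lam i / nu j)) := by
    intro i j
    rw [hK]
    exact csInf_le (Set.finite_range _).bddBelow ⟨(i,j), rfl⟩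
  have hKmin1 : 1 ≤ Kmin := by
    rw [hK]
    have hne : Nonempty (Fin n × Fin n) := ⟨(⟨0,hn⟩, ⟨0,hn⟩)⟩
    apply le_csInf (Set.range_nonempty _)
    rintro x ⟨p, rfl⟩
    exact Kant_ge_one (Real.sqrt_pos.mpr
      (div_pos (hA.eigenvalues_pos p.1) (hB.eigenvalues_pos p.2)))
  have hKminpos : 0 < Kmin := lt_of_lt_of_le one_pos hKmin1
  have hrv : r = v := by rw [hr]; exact min_eq_left (by linarith)
  have hr1' : r1 = min (2*v) (1-2*v) := by rw [hr1, hrv]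
  have hr1nn : 0 ≤ r1 := by rw [hr1']; exact le_min (by linarith) (by linarith)
  have hrh1nn : 0 ≤ rh1 := by
    rw [hrh1]
    rcases le_total (2*v) (1-2*v) with h|h
    · rw [hr1', min_eq_left h]; exact le_min (by linarith) (by linarith)
    · rw [hr1', min_eq_right h]; exact le_min (by linarith) (by linarith)
  have key : ∀ i j : Fin n,
      ((1-v)*lam i + v*nu j)^2 - (1-v)^2*(lam i - nu j)^2
        ≤ Kmin^(-rh1) * (lam i ^ (1-v) * nu j ^ v)^2
          - r1 * (lam i ^ ((1:ℝ)/2) * nu j ^ ((1:ℝ)/2) - nu j)^2 := by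
    intro i j
    have ha : 0 < lam i := hA.eigenvalues_pos i
    have hb : 0 < nu j := hB.eigenvalues_pos j
    have hs := scalar_final ha hb hv0 hv
    rw [← hr1', ← hrh1] at hs
    have hmono : Kant (Real.sqrt (lam i / nu j)) ^ (-rh1) ≤ Kmin ^ (-rh1) :=
      Real.rpow_le_rpow_of_nonpos hKminpos (hKm i j) (neg_nonpos.mpr hrh1nn)
    have h3nn : (0:ℝ) ≤ (lam i ^ ((1:ℝ)-v) * nu j ^ v)^2 := sq_nonneg _
    have := mul_le_mul_of_nonneg_right hmono h3nn
    linarith [hs, this]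
  have hyn : ∀ i j, (0:ℝ) ≤ ‖Y i j‖^2 := fun i j => sq_nonneg _
  calc (∑ i : Fin n, ∑ j : Fin n, ((1-v)*lam i + v*nu j)^2 * ‖Y i j‖^2)
        - (1-v)^2 * ∑ i : Fin n, ∑ j : Fin n, (lam i - nu j)^2 * ‖Y i j‖^2
      = ∑ i : Fin n, ∑ j : Fin n,
          (((1-v)*lam i + v*nu j)^2 - (1-v)^2*(lam i - nu j)^2) * ‖Y i j‖^2 := by
        rw [Finset.mul_sum, ← Finset.sum_sub_distrib]
        refine Finset.sum_congr rfl fun i _ => ?_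
        rw [Finset.mul_sum, ← Finset.sum_sub_distrib]
        refine Finset.sum_congr rfl fun j _ => ?_
        ring
    _ ≤ ∑ i : Fin n, ∑ j : Fin n,
          (Kmin^(-rh1) * (lam i ^ (1-v) * nu j ^ v)^2
            - r1 * (lam i ^ ((1:ℝ)/2) * nu j ^ ((1:ℝ)/2) - nu j)^2)
            * ‖Y i j‖^2 := by
        refine Finset.sum_le_sum fun i _ => Finset.sum_le_sum fun j _ => ?_
        exact mul_le_mul_of_nonneg_right (key i j) (hyn i j)
    _ = Kmin^(-rh1) * (∑ i : Fin n, ∑ j : Fin n,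
            (lam i ^ (1-v) * nu j ^ v)^2 * ‖Y i j‖^2)
        - r1 * ∑ i : Fin n, ∑ j : Fin n,
            (lam i ^ ((1:ℝ)/2) * nu j ^ ((1:ℝ)/2) - nu j)^2 * ‖Y i j‖^2 := by
        rw [Finset.mul_sum, Finset.mul_sum, ← Finset.sum_sub_distrib]
        refine Finset.sum_congr rfl fun i _ => ?_
        rw [Finset.mul_sum, Finset.mul_sum, ← Finset.sum_sub_distrib]
        refine Finset.sum_congr rfl fun j _ => ?_
        ring
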